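/- (Proposition: Casimirs of the closed-loop system.) Let p, q be positive integers, ε = (−1)^{q(p+1)}, let A ∈ ℝ^{N_q×N_p}, B ∈ ℝ^{N_b×N_p}, and g ∈ ℝ^{m×N_b} be real matrices. Consider, for a continuously differentiable closed-loop Hamiltonian H : ℝ^{N_p}×ℝ^{N_q}×ℝ^m → ℝ, the closed-loop system x'(t) = ε Aᵀ ∇₂H + ε Bᵀ gᵀ ∇₃H, z'(t) = −A ∇₁H, ζ'(t) = (−1)^p g B ∇₁H (all gradients evaluated at (x(t),z(t),ζ(t))). Let C : ℝ^{N_p}×ℝ^{N_q}×ℝ^m → ℝ be continuously differentiable. Then the following are equivalent: (i) at every point, A ∇₁C = 0, g B ∇₁C = 0, and Aᵀ ∇₂C = (−1)^p Bᵀ gᵀ ∇₃C; (ii) for every continuously differentiable H and every differentiable solution (x,z,ζ) of the closed-loop system, t ↦ C(x(t),z(t),ζ(t)) is constant (C is a Casimir function of the closed-loop system). -/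

import Mathlib

open Matrix

noncomputable def dotCLM {n : ℕ} (a : Fin n → ℝ) : (Fin n → ℝ) →L[ℝ] ℝ :=
  ∑ i, a i • ContinuousLinearMap.proj i

lemma dotCLM_apply {n : ℕ} (a v : Fin n → ℝ) : dotCLM a v = a ⬝ᵥ v := by
  simp [dotCLM, dotProduct, ContinuousLinearMap.sum_apply]

noncomputable def linH {n1 n2 n3 : ℕ} (a : Fin n1 → ℝ) (b : Fin n2 → ℝ) (c : Fin n3 → ℝ) :
    ((Fin n1 → ℝ) × (Fin n2 → ℝ) × (Fin n3 → ℝ)) →L[ℝ] ℝ :=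
  (dotCLM a).comp (ContinuousLinearMap.fst ℝ _ _)
  + (dotCLM b).comp ((ContinuousLinearMap.fst ℝ _ _).comp (ContinuousLinearMap.snd ℝ _ _))
  + (dotCLM c).comp ((ContinuousLinearMap.snd ℝ _ _).comp (ContinuousLinearMap.snd ℝ _ _))

lemma linH_apply {n1 n2 n3 : ℕ} (a : Fin n1 → ℝ) (b : Fin n2 → ℝ) (c : Fin n3 → ℝ) (v) :
    linH a b c v = a ⬝ᵥ v.1 + b ⬝ᵥ v.2.1 + c ⬝ᵥ v.2.2 := by
  simp [linH, dotCLM_apply]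

lemma linH_fderiv {n1 n2 n3 : ℕ} (a : Fin n1 → ℝ) (b : Fin n2 → ℝ) (c : Fin n3 → ℝ) (y v) :
    fderiv ℝ (⇑(linH a b c)) y v = a ⬝ᵥ v.1 + b ⬝ᵥ v.2.1 + c ⬝ᵥ v.2.2 := by
  rw [ContinuousLinearMap.fderiv, linH_apply]

lemma dot_mulVec_comm {n k : ℕ} (u : Fin k → ℝ) (M : Matrix (Fin k) (Fin n) ℝ) (v : Fin n → ℝ) :
    u ⬝ᵥ M.mulVec v = Mᵀ.mulVec u ⬝ᵥ v := by
  rw [dotProduct_mulVec, mulVec_transpose]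

lemma eq_zero_of_dot {n : ℕ} (u : Fin n → ℝ) (h : ∀ v, u ⬝ᵥ v = 0) : u = 0 := by
  funext i
  simpa [dotProduct, Pi.single_apply] using h (Pi.single i 1)

lemma line_deriv {n : ℕ} (w c : Fin n → ℝ) (t : ℝ) :
    HasDerivAt (fun s : ℝ => s • w + c) w t := by
  simpa using ((hasDerivAt_id t).smul_const w).add_const c

/-- Casimirs of the closed-loop system, matrix form: with
ε = (−1)^{q(p+1)}, the kernel conditions A∇₁C = 0, gB∇₁C = 0 and
Aᵀ∇₂C = (−1)^p Bᵀgᵀ∇₃C (pointwise) hold iff C is constant along every solution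
of the closed-loop system x' = εAᵀ∇₂H + εBᵀgᵀ∇₃H, z' = −A∇₁H, ζ' = (−1)^p gB∇₁H,
for every C¹ closed-loop Hamiltonian H. -/
theorem closed_loop_casimir_characterization (p q Np Nq Nb m : ℕ)
    (hp : 0 < p) (hq : 0 < q)
    (A : Matrix (Fin Nq) (Fin Np) ℝ) (B : Matrix (Fin Nb) (Fin Np) ℝ)
    (g : Matrix (Fin m) (Fin Nb) ℝ)
    (C : (Fin Np → ℝ) × (Fin Nq → ℝ) × (Fin m → ℝ) → ℝ)
    (gC1 : (Fin Np → ℝ) × (Fin Nq → ℝ) × (Fin m → ℝ) → Fin Np → ℝ)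
    (gC2 : (Fin Np → ℝ) × (Fin Nq → ℝ) × (Fin m → ℝ) → Fin Nq → ℝ)
    (gC3 : (Fin Np → ℝ) × (Fin Nq → ℝ) × (Fin m → ℝ) → Fin m → ℝ)
    (hC : ContDiff ℝ 1 C)
    (hgC : ∀ y v, fderiv ℝ C y v = gC1 y ⬝ᵥ v.1 + gC2 y ⬝ᵥ v.2.1 + gC3 y ⬝ᵥ v.2.2) :
    (∀ y : (Fin Np → ℝ) × (Fin Nq → ℝ) × (Fin m → ℝ),
        A.mulVec (gC1 y) = 0 ∧
        g.mulVec (B.mulVec (gC1 y)) = 0 ∧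
        Aᵀ.mulVec (gC2 y) = (-1 : ℝ) ^ p • Bᵀ.mulVec (gᵀ.mulVec (gC3 y)))
      ↔
    (∀ (H : (Fin Np → ℝ) × (Fin Nq → ℝ) × (Fin m → ℝ) → ℝ)
        (gH1 : (Fin Np → ℝ) × (Fin Nq → ℝ) × (Fin m → ℝ) → Fin Np → ℝ)
        (gH2 : (Fin Np → ℝ) × (Fin Nq → ℝ) × (Fin m → ℝ) → Fin Nq → ℝ)
        (gH3 : (Fin Np → ℝ) × (Fin Nq → ℝ) × (Fin m → ℝ) → Fin m → ℝ),
        ContDiff ℝ 1 H →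
        (∀ y v, fderiv ℝ H y v = gH1 y ⬝ᵥ v.1 + gH2 y ⬝ᵥ v.2.1 + gH3 y ⬝ᵥ v.2.2) →
        ∀ (I : Set ℝ), I.OrdConnected →
        ∀ (x : ℝ → Fin Np → ℝ) (z : ℝ → Fin Nq → ℝ) (ζ : ℝ → Fin m → ℝ),
          (∀ t ∈ I, HasDerivAt x
            ((-1 : ℝ) ^ (q * (p + 1)) • Aᵀ.mulVec (gH2 (x t, z t, ζ t))
              + (-1 : ℝ) ^ (q * (p + 1)) • Bᵀ.mulVec (gᵀ.mulVec (gH3 (x t, z t, ζ t)))) t) →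
          (∀ t ∈ I, HasDerivAt z (-(A.mulVec (gH1 (x t, z t, ζ t)))) t) →
          (∀ t ∈ I, HasDerivAt ζ
            ((-1 : ℝ) ^ p • g.mulVec (B.mulVec (gH1 (x t, z t, ζ t)))) t) →
          ∀ s ∈ I, ∀ t ∈ I, C (x s, z s, ζ s) = C (x t, z t, ζ t)) := by
  constructor
  · -- forward: kernel conditions ⟹ Casimir
    intro hker H gH1 gH2 gH3 hH hgH I hI x z ζ hx hz hζ
    have key : ∀ u ∈ I, HasDerivAt (fun r => C (x r, z r, ζ r)) 0 u := by
      intro u hu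
      have hγ : HasDerivAt (fun r => (x r, z r, ζ r))
          (((-1 : ℝ) ^ (q * (p + 1)) • Aᵀ.mulVec (gH2 (x u, z u, ζ u))
              + (-1 : ℝ) ^ (q * (p + 1)) • Bᵀ.mulVec (gᵀ.mulVec (gH3 (x u, z u, ζ u))),
            (-(A.mulVec (gH1 (x u, z u, ζ u))),
             (-1 : ℝ) ^ p • g.mulVec (B.mulVec (gH1 (x u, z u, ζ u)))))) u :=
        (hx u hu).prodMk ((hz u hu).prodMk (hζ u hu))
      have hcomp := (hC.differentiable one_ne_zero _).hasFDerivAt.comp_hasDerivAt u hγ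
      have hval : fderiv ℝ C (x u, z u, ζ u)
          (((-1 : ℝ) ^ (q * (p + 1)) • Aᵀ.mulVec (gH2 (x u, z u, ζ u))
              + (-1 : ℝ) ^ (q * (p + 1)) • Bᵀ.mulVec (gᵀ.mulVec (gH3 (x u, z u, ζ u))),
            (-(A.mulVec (gH1 (x u, z u, ζ u))),
             (-1 : ℝ) ^ p • g.mulVec (B.mulVec (gH1 (x u, z u, ζ u)))))) = 0 := by
        rw [hgC]
        obtain ⟨h1, h2, h3⟩ := hker (x u, z u, ζ u)
        set y := (x u, z u, ζ u)
        simp only [dotProduct_add, dotProduct_smul, dotProduct_neg]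
        rw [dot_mulVec_comm (gC1 y) Aᵀ, transpose_transpose, h1,
            dot_mulVec_comm (gC1 y) Bᵀ, transpose_transpose,
            dot_mulVec_comm (B.mulVec (gC1 y)) gᵀ, transpose_transpose, h2,
            dot_mulVec_comm (gC2 y) A, h3,
            dot_mulVec_comm (gC3 y) g, dot_mulVec_comm (gᵀ.mulVec (gC3 y)) B]
        simp [smul_dotProduct]
      rw [hval] at hcomp
      exact hcomp
    have const_on : ∀ s ∈ I, ∀ t ∈ I, s ≤ t → C (x s, z s, ζ s) = C (x t, z t, ζ t) := by
      intro s hs t ht hst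
      have hsub : Set.Icc s t ⊆ I := hI.out hs ht
      have := constant_of_has_deriv_right_zero
        (f := fun r => C (x r, z r, ζ r)) (a := s) (b := t)
        (fun u hu => (key u (hsub hu)).continuousAt.continuousWithinAt)
        (fun u hu => (key u (hsub (Set.Ico_subset_Icc_self hu))).hasDerivWithinAt)
        t (Set.right_mem_Icc.2 hst)
      exact this.symm
    intro s hs t ht
    rcases le_total s t with h | h
    · exact const_on s hs t ht h
    · exact (const_on t ht s hs h).symm
  · -- backward: Casimir for all H ⟹ kernel conditions
    intro hcas y
    have main : ∀ (a : Fin Np → ℝ) (b : Fin Nq → ℝ) (c : Fin m → ℝ),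
        gC1 y ⬝ᵥ ((-1 : ℝ) ^ (q * (p + 1)) • Aᵀ.mulVec b
            + (-1 : ℝ) ^ (q * (p + 1)) • Bᵀ.mulVec (gᵀ.mulVec c))
          + gC2 y ⬝ᵥ (-(A.mulVec a))
          + gC3 y ⬝ᵥ ((-1 : ℝ) ^ p • g.mulVec (B.mulVec a)) = 0 := by
      intro a b c
      set w1 : Fin Np → ℝ := (-1 : ℝ) ^ (q * (p + 1)) • Aᵀ.mulVec b
            + (-1 : ℝ) ^ (q * (p + 1)) • Bᵀ.mulVec (gᵀ.mulVec c) with hw1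
      set w2 : Fin Nq → ℝ := -(A.mulVec a) with hw2
      set w3 : Fin m → ℝ := (-1 : ℝ) ^ p • g.mulVec (B.mulVec a) with hw3
      have hconst := hcas (⇑(linH a b c)) (fun _ => a) (fun _ => b) (fun _ => c)
        ((linH a b c).contDiff) (fun y v => linH_fderiv a b c y v)
        Set.univ Set.ordConnected_univ
        (fun r => r • w1 + y.1) (fun r => r • w2 + y.2.1) (fun r => r • w3 + y.2.2)
        (fun t _ => line_deriv w1 y.1 t)
        (fun t _ => line_deriv w2 y.2.1 t)
        (fun t _ => line_deriv w3 y.2.2 t)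
      have hγ : HasDerivAt
          (fun r : ℝ => (r • w1 + y.1, (r • w2 + y.2.1, r • w3 + y.2.2))) (w1, (w2, w3)) 0 :=
        (line_deriv w1 y.1 0).prodMk ((line_deriv w2 y.2.1 0).prodMk (line_deriv w3 y.2.2 0))
      have hcomp := (hC.differentiable one_ne_zero _).hasFDerivAt.comp_hasDerivAt 0 hγ
      have hf_const : (fun r : ℝ => C (r • w1 + y.1, (r • w2 + y.2.1, r • w3 + y.2.2)))
          = fun _ : ℝ => C (0 • w1 + y.1, (0 • w2 + y.2.1, 0 • w3 + y.2.2)) := by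
        funext r
        simpa using hconst r trivial 0 trivial
      have hzero : HasDerivAt
          (fun r : ℝ => C (r • w1 + y.1, (r • w2 + y.2.1, r • w3 + y.2.2))) 0 0 := by
        rw [hf_const]; exact hasDerivAt_const 0 _
      have huniq := hzero.unique hcomp
      rw [hgC] at huniq
      simp only [zero_smul, zero_add] at huniq
      exact huniq.symm
    refine ⟨?_, ?_, ?_⟩
    · refine eq_zero_of_dot _ (fun b => ?_)
      have h0 := main 0 b 0
      simp only [mulVec_zero, smul_zero, neg_zero, add_zero, dotProduct_zero,
        dotProduct_add, dotProduct_smul] at h0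
      rw [dot_mulVec_comm (gC1 y) Aᵀ, transpose_transpose] at h0
      have h2 : ((-1 : ℝ) ^ (q * (p + 1))) * (A.mulVec (gC1 y) ⬝ᵥ b) = 0 := by
        simpa using h0
      rcases mul_eq_zero.1 h2 with h | h
      · exact absurd h (by positivity)
      · simpa using h
    · refine eq_zero_of_dot _ (fun c => ?_)
      have h0 := main 0 0 c
      simp only [mulVec_zero, smul_zero, neg_zero, add_zero, zero_add, dotProduct_zero,
        dotProduct_add, dotProduct_smul] at h0
      rw [dot_mulVec_comm (gC1 y) Bᵀ, transpose_transpose,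
        dot_mulVec_comm (B.mulVec (gC1 y)) gᵀ, transpose_transpose] at h0
      have h2 : ((-1 : ℝ) ^ (q * (p + 1))) * (g.mulVec (B.mulVec (gC1 y)) ⬝ᵥ c) = 0 := by
        simpa using h0
      rcases mul_eq_zero.1 h2 with h | h
      · exact absurd h (by positivity)
      · simpa using h
    · have key : ∀ a, (Aᵀ.mulVec (gC2 y) - (-1 : ℝ) ^ p • Bᵀ.mulVec (gᵀ.mulVec (gC3 y))) ⬝ᵥ a
          = 0 := by
        intro a
        have h0 := main a 0 0
        simp only [mulVec_zero, smul_zero, add_zero, dotProduct_zero, zero_add,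
          dotProduct_neg, dotProduct_smul] at h0
        rw [dot_mulVec_comm (gC2 y) A,
          dot_mulVec_comm (gC3 y) g, dot_mulVec_comm (gᵀ.mulVec (gC3 y)) B] at h0
        rw [sub_dotProduct, smul_dotProduct]
        linarith [h0]
      exact sub_eq_zero.1 (eq_zero_of_dot _ key)
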